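/- Let ρ be an elliptic N-function. Then uniformly in a ≥ 0 and λ ∈ [0,1]: ρ_a(λa) ∼ λ²·ρ(a) ∼ (ρ_a)*(λ·ρ'(a)), with implicit constants depending only on the characteristics of ρ. -/

import Mathlib

open Set Filter

/-- An N-function: strictly increasing and convex on `[0,∞)`, vanishing at `0`,
with `ρ(t)/t → 0` as `t → 0⁺` and `t/ρ(t) → 0` as `t → ∞`. -/
def IsNFunction (ρ : ℝ → ℝ) : Prop :=
  ρ 0 = 0 ∧ StrictMonoOn ρ (Ici 0) ∧ ConvexOn ℝ (Ici 0) ρ ∧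
    Tendsto (fun t => ρ t / t) (nhdsWithin 0 (Ioi 0)) (nhds 0) ∧
    Tendsto (fun t => t / ρ t) atTop (nhds 0)

/-- The conjugate (Young/Legendre) function `ρ*(t) = sup_{s ≥ 0} (s t − ρ s)`. -/
noncomputable def conjN (ρ : ℝ → ℝ) (t : ℝ) : ℝ :=
  sSup {y | ∃ s ≥ 0, y = s * t - ρ s}

/-- The shifted N-function `ρ_a(t) = ∫₀ᵗ ρ'(a+τ)/(a+τ) · τ dτ`. -/
noncomputable def shiftN (ρ : ℝ → ℝ) (a : ℝ) (t : ℝ) : ℝ :=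
  ∫ τ in (0:ℝ)..t, deriv ρ (a + τ) / (a + τ) * τ

/-- An elliptic N-function with characteristics `c₁, c₂`: `C¹` on `[0,∞)`,
`C²` on `(0,∞)`, and `ρ'(t) ∼ t ρ''(t)` uniformly in `t > 0`. -/
def IsElliptic (ρ : ℝ → ℝ) (c₁ c₂ : ℝ) : Prop :=
  ContDiffOn ℝ 1 ρ (Ici 0) ∧ ContDiffOn ℝ 2 ρ (Ioi 0) ∧
    ∀ t > 0, c₁ * deriv ρ t ≤ t * deriv (deriv ρ) t ∧
      t * deriv (deriv ρ) t ≤ c₂ * deriv ρ t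

namespace Stmt8

variable {ρ : ℝ → ℝ} {c₁ c₂ : ℝ}

lemma d2 (hE : IsElliptic ρ c₁ c₂) : ContDiffOn ℝ 1 (deriv ρ) (Ioi 0) :=
  hE.2.1.deriv_of_isOpen isOpen_Ioi (by norm_num)

lemma contOn_d (hE : IsElliptic ρ c₁ c₂) : ContinuousOn (deriv ρ) (Ioi 0) :=
  (d2 hE).continuousOn

lemma diffAt (hE : IsElliptic ρ c₁ c₂) {t : ℝ} (ht : 0 < t) : DifferentiableAt ℝ ρ t :=
  ((hE.2.1.differentiableOn (by norm_num)).differentiableAt (isOpen_Ioi.mem_nhds ht))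

lemma diffAt_d (hE : IsElliptic ρ c₁ c₂) {t : ℝ} (ht : 0 < t) :
    DifferentiableAt ℝ (deriv ρ) t :=
  ((d2 hE).differentiableOn one_ne_zero).differentiableAt (isOpen_Ioi.mem_nhds ht)

lemma deriv_nonneg (hN : IsNFunction ρ) (hE : IsElliptic ρ c₁ c₂) {t : ℝ} (ht : 0 < t) :
    0 ≤ deriv ρ t := by
  have h1 : HasDerivWithinAt ρ (deriv ρ t) (Ioi t) t :=
    (diffAt hE ht).hasDerivAt.hasDerivWithinAt
  rw [hasDerivWithinAt_iff_tendsto_slope' (notMem_Ioi.2 le_rfl)] at h1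
  refine ge_of_tendsto h1 ?_
  filter_upwards [self_mem_nhdsWithin] with y hy
  have hty : t < y := hy
  have hmono : ρ t ≤ ρ y := (hN.2.1.monotoneOn) ht.le (ht.trans hty).le hty.le
  rw [slope_def_field]
  exact div_nonneg (by linarith) (by linarith)

lemma deriv2_nonneg (hc₁ : 0 < c₁) (hN : IsNFunction ρ) (hE : IsElliptic ρ c₁ c₂)
    {t : ℝ} (ht : 0 < t) : 0 ≤ deriv (deriv ρ) t := by
  have h1 := (hE.2.2 t ht).1
  have h2 : 0 ≤ t * deriv (deriv ρ) t :=
    le_trans (mul_nonneg hc₁.le (deriv_nonneg hN hE ht)) h1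
  exact (mul_nonneg_iff_of_pos_left ht).mp h2

lemma mono_d (hc₁ : 0 < c₁) (hN : IsNFunction ρ) (hE : IsElliptic ρ c₁ c₂) :
    MonotoneOn (deriv ρ) (Ioi 0) := by
  refine monotoneOn_of_deriv_nonneg (convex_Ioi 0) (contOn_d hE) ?_ ?_
  · rw [interior_Ioi]; exact fun x hx => (diffAt_d hE hx).differentiableWithinAt
  · rw [interior_Ioi]; exact fun x hx => deriv2_nonneg hc₁ hN hE hx

lemma deriv_pos (hc₁ : 0 < c₁) (hN : IsNFunction ρ) (hE : IsElliptic ρ c₁ c₂)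
    {t : ℝ} (ht : 0 < t) : 0 < deriv ρ t := by
  obtain ⟨c, hc, hceq⟩ := exists_hasDerivAt_eq_slope ρ (deriv ρ) (half_lt_self ht)
    (hE.1.continuousOn.mono (fun x hx => le_trans (show (0:ℝ) ≤ t/2 by positivity) hx.1))
    (fun x hx => (diffAt hE (lt_trans (show (0:ℝ) < t/2 by positivity) hx.1)).hasDerivAt)
  have h1 : ρ (t/2) < ρ t :=
    hN.2.1 (mem_Ici.mpr (by positivity)) (mem_Ici.mpr ht.le) (half_lt_self ht)
  have h2 : 0 < deriv ρ c := by rw [hceq]; apply div_pos <;> linarith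
  exact lt_of_lt_of_le h2
    (mono_d hc₁ hN hE (lt_trans (show (0:ℝ) < t/2 by positivity) hc.1) ht hc.2.le)

lemma grow_upper (hN : IsNFunction ρ) (hE : IsElliptic ρ c₁ c₂) {x y : ℝ}
    (hx : 0 < x) (hxy : x ≤ y) : deriv ρ y ≤ (y/x) ^ c₂ * deriv ρ x := by
  have hanti : AntitoneOn (fun t => deriv ρ t * t ^ (-c₂)) (Ioi 0) := by
    have hder : ∀ x ∈ Ioi (0:ℝ), HasDerivAt (fun t => deriv ρ t * t ^ (-c₂))
        (deriv (deriv ρ) x * x ^ (-c₂) + deriv ρ x * (-c₂ * x ^ (-c₂ - 1))) x := by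
      intro x hx
      exact ((diffAt_d hE hx).hasDerivAt).mul (Real.hasDerivAt_rpow_const (Or.inl (ne_of_gt hx)))
    refine antitoneOn_of_deriv_nonpos (convex_Ioi 0) ?_ ?_ ?_
    · exact (contOn_d hE).mul (fun t ht =>
        (Real.continuousAt_rpow_const t (-c₂) (Or.inl (ne_of_gt ht))).continuousWithinAt)
    · rw [interior_Ioi]; exact fun x hx => (hder x hx).differentiableAt.differentiableWithinAt
    · rw [interior_Ioi]; intro x hx
      rw [(hder x hx).deriv]
      have h2 := (hE.2.2 x hx).2
      have e1 : x ^ (-c₂) = x ^ (-c₂ - 1) * x := by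
        rw [← Real.rpow_add_one (ne_of_gt hx)]; ring_nf
      have hp : (0:ℝ) ≤ x ^ (-c₂ - 1) := Real.rpow_nonneg (le_of_lt hx) _
      rw [e1]
      nlinarith [mul_nonneg hp (sub_nonneg.mpr h2)]
  have hy : 0 < y := lt_of_lt_of_le hx hxy
  have h := hanti (mem_Ioi.mpr hx) (mem_Ioi.mpr hy) hxy
  simp only [Real.rpow_neg hx.le, Real.rpow_neg hy.le, ← div_eq_mul_inv] at h
  rw [div_le_div_iff₀ (Real.rpow_pos_of_pos hy c₂) (Real.rpow_pos_of_pos hx c₂)] at h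
  rw [Real.div_rpow hy.le hx.le, div_mul_eq_mul_div, le_div_iff₀ (Real.rpow_pos_of_pos hx c₂)]
  linarith

lemma grow_lower (hc₁ : 0 < c₁) (hN : IsNFunction ρ) (hE : IsElliptic ρ c₁ c₂) {x y : ℝ}
    (hx : 0 < x) (hxy : x ≤ y) : (y/x) ^ c₁ * deriv ρ x ≤ deriv ρ y := by
  have hmono : MonotoneOn (fun t => deriv ρ t * t ^ (-c₁)) (Ioi 0) := by
    have hder : ∀ x ∈ Ioi (0:ℝ), HasDerivAt (fun t => deriv ρ t * t ^ (-c₁))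
        (deriv (deriv ρ) x * x ^ (-c₁) + deriv ρ x * (-c₁ * x ^ (-c₁ - 1))) x := by
      intro x hx
      exact ((diffAt_d hE hx).hasDerivAt).mul (Real.hasDerivAt_rpow_const (Or.inl (ne_of_gt hx)))
    refine monotoneOn_of_deriv_nonneg (convex_Ioi 0) ?_ ?_ ?_
    · exact (contOn_d hE).mul (fun t ht =>
        (Real.continuousAt_rpow_const t (-c₁) (Or.inl (ne_of_gt ht))).continuousWithinAt)
    · rw [interior_Ioi]; exact fun x hx => (hder x hx).differentiableAt.differentiableWithinAt
    · rw [interior_Ioi]; intro x hx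
      rw [(hder x hx).deriv]
      have h2 := (hE.2.2 x hx).1
      have e1 : x ^ (-c₁) = x ^ (-c₁ - 1) * x := by
        rw [← Real.rpow_add_one (ne_of_gt hx)]; ring_nf
      have hp : (0:ℝ) ≤ x ^ (-c₁ - 1) := Real.rpow_nonneg (le_of_lt hx) _
      rw [e1]
      nlinarith [mul_nonneg hp (sub_nonneg.mpr h2)]
  have hy : 0 < y := lt_of_lt_of_le hx hxy
  have h := hmono (mem_Ioi.mpr hx) (mem_Ioi.mpr hy) hxy
  simp only [Real.rpow_neg hx.le, Real.rpow_neg hy.le, ← div_eq_mul_inv] at h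
  rw [div_le_div_iff₀ (Real.rpow_pos_of_pos hx c₁) (Real.rpow_pos_of_pos hy c₁)] at h
  rw [Real.div_rpow hy.le hx.le, div_mul_eq_mul_div, div_le_iff₀ (Real.rpow_pos_of_pos hx c₁)]
  linarith

lemma rho_nonneg (hN : IsNFunction ρ) {a : ℝ} (ha : 0 ≤ a) : 0 ≤ ρ a := by
  have := (hN.2.1.monotoneOn) (mem_Ici.mpr le_rfl) (mem_Ici.mpr ha) ha
  rwa [hN.1] at this

lemma rho_le (hc₁ : 0 < c₁) (hN : IsNFunction ρ) (hE : IsElliptic ρ c₁ c₂)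
    {a : ℝ} (ha : 0 < a) : ρ a ≤ a * deriv ρ a := by
  obtain ⟨c, hc, hceq⟩ := exists_hasDerivAt_eq_slope ρ (deriv ρ) ha
    (hE.1.continuousOn.mono (fun x hx => hx.1))
    (fun x hx => (diffAt hE hx.1).hasDerivAt)
  have h1 : deriv ρ c ≤ deriv ρ a := mono_d hc₁ hN hE (mem_Ioi.mpr hc.1) (mem_Ioi.mpr ha) hc.2.le
  rw [hceq, hN.1, sub_zero, sub_zero] at h1
  calc ρ a = a * (ρ a / a) := by field_simp
  _ ≤ a * deriv ρ a := by apply mul_le_mul_of_nonneg_left h1 ha.le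

lemma ad_le (hc₁ : 0 < c₁) (hN : IsNFunction ρ) (hE : IsElliptic ρ c₁ c₂)
    {a : ℝ} (ha : 0 < a) : a * deriv ρ a ≤ 2 * 2 ^ c₂ * ρ a := by
  obtain ⟨c, hc, hceq⟩ := exists_hasDerivAt_eq_slope ρ (deriv ρ) (half_lt_self ha)
    (hE.1.continuousOn.mono (fun x hx => le_trans (show (0:ℝ) ≤ a/2 by positivity) hx.1))
    (fun x hx => (diffAt hE (lt_trans (show (0:ℝ) < a/2 by positivity) hx.1)).hasDerivAt)
  have hρh : 0 ≤ ρ (a/2) := rho_nonneg hN (by positivity)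
  have h1 : deriv ρ a ≤ 2 ^ c₂ * deriv ρ (a/2) := by
    have := grow_upper hN hE (x := a/2) (y := a) (by positivity) (by linarith)
    rwa [show a / (a/2) = 2 by field_simp] at this
  have h2 : deriv ρ (a/2) ≤ deriv ρ c :=
    mono_d hc₁ hN hE (mem_Ioi.mpr (by positivity))
      (mem_Ioi.mpr (lt_trans (by positivity) hc.1)) hc.1.le
  have h4 : deriv ρ c ≤ 2 * ρ a / a := by
    rw [hceq, show a - a/2 = a/2 by ring, div_le_div_iff₀ (by positivity) ha]
    nlinarith [mul_nonneg hρh ha.le]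
  have hB : (0:ℝ) < 2 ^ c₂ := Real.rpow_pos_of_pos (by norm_num) _
  calc a * deriv ρ a ≤ a * (2 ^ c₂ * (2 * ρ a / a)) := by
        apply mul_le_mul_of_nonneg_left _ ha.le
        exact le_trans h1 (mul_le_mul_of_nonneg_left (le_trans h2 h4) hB.le)
  _ = 2 * 2 ^ c₂ * ρ a := by field_simp

lemma fint (hE : IsElliptic ρ c₁ c₂) {a u v : ℝ} (ha : 0 < a) (hu : 0 ≤ u) (huv : u ≤ v) :
    IntervalIntegrable (fun τ => deriv ρ (a + τ) / (a + τ) * τ) MeasureTheory.volume u v := by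
  apply ContinuousOn.intervalIntegrable
  rw [uIcc_of_le huv]
  have h1 : ContinuousOn (fun τ : ℝ => deriv ρ (a + τ)) (Icc u v) := by
    refine (contOn_d hE).comp ((continuous_const.add continuous_id).continuousOn) ?_
    intro τ hτ
    have : 0 ≤ τ := le_trans hu hτ.1
    simpa using by linarith [ha]
  refine (h1.div ((continuous_const.add continuous_id).continuousOn) ?_).mul continuousOn_id
  intro τ hτ
  have : 0 ≤ τ := le_trans hu hτ.1
  exact (by linarith : (0:ℝ) < a + τ).ne'

lemma shift_nonneg (hN : IsNFunction ρ) (hE : IsElliptic ρ c₁ c₂)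
    {a s : ℝ} (ha : 0 ≤ a) (hs : 0 ≤ s) : 0 ≤ shiftN ρ a s := by
  apply intervalIntegral.integral_nonneg hs
  intro u hu
  rcases eq_or_lt_of_le hu.1 with h | h
  · simp [← h]
  · have hpos : 0 < a + u := by linarith
    exact mul_nonneg (div_nonneg (deriv_nonneg hN hE hpos) hpos.le) hu.1

lemma shift_upper (hc₂ : 0 < c₂) (hN : IsNFunction ρ) (hE : IsElliptic ρ c₁ c₂)
    {a T : ℝ} (ha : 0 < a) (hT : 0 ≤ T) (hTa : T ≤ a) :
    shiftN ρ a T ≤ 2 ^ c₂ * deriv ρ a / a * (T ^ 2 / 2) := by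
  have key : ∀ τ ∈ Icc 0 T, deriv ρ (a + τ) / (a + τ) * τ ≤ 2 ^ c₂ * deriv ρ a / a * τ := by
    intro τ hτ
    have hτ0 : 0 ≤ τ := hτ.1
    have hτT : τ ≤ T := hτ.2
    have hd1 : deriv ρ (a + τ) ≤ ((a+τ)/a) ^ c₂ * deriv ρ a := grow_upper hN hE ha (by linarith)
    have hd2 : ((a+τ)/a) ^ c₂ ≤ 2 ^ c₂ := by
      apply Real.rpow_le_rpow (by positivity) _ hc₂.le
      rw [div_le_iff₀ ha]; linarith
    have hd3 : deriv ρ (a + τ) ≤ 2 ^ c₂ * deriv ρ a :=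
      le_trans hd1 (mul_le_mul_of_nonneg_right hd2 (deriv_nonneg hN hE ha))
    have h4 : deriv ρ (a + τ) / (a + τ) ≤ 2 ^ c₂ * deriv ρ a / a :=
      div_le_div₀ (mul_nonneg (by positivity) (deriv_nonneg hN hE ha)) hd3 ha (by linarith)
    exact mul_le_mul_of_nonneg_right h4 hτ0
  have h5 := intervalIntegral.integral_mono_on hT (fint hE ha le_rfl hT)
    (((continuous_const.mul continuous_id).continuousOn).intervalIntegrable) key
  calc shiftN ρ a T ≤ ∫ τ in (0:ℝ)..T, 2 ^ c₂ * deriv ρ a / a * τ := h5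
  _ = 2 ^ c₂ * deriv ρ a / a * (T ^ 2 / 2) := by
      rw [intervalIntegral.integral_const_mul, integral_id]
      norm_num

lemma shift_lower1 (hc₁ : 0 < c₁) (hN : IsNFunction ρ) (hE : IsElliptic ρ c₁ c₂)
    {a T K : ℝ} (ha : 0 < a) (hT : 0 ≤ T) (hK : 0 < K) (hTa : T ≤ K * a) :
    deriv ρ a / ((K + 1) * a) * (T ^ 2 / 2) ≤ shiftN ρ a T := by
  have key : ∀ τ ∈ Icc 0 T, deriv ρ a / ((K + 1) * a) * τ ≤ deriv ρ (a + τ) / (a + τ) * τ := by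
    intro τ hτ
    have hτ0 : 0 ≤ τ := hτ.1
    have hd1 : deriv ρ a ≤ deriv ρ (a + τ) :=
      mono_d hc₁ hN hE (mem_Ioi.mpr ha) (mem_Ioi.mpr (by linarith)) (by linarith)
    have h4 : deriv ρ a / ((K + 1) * a) ≤ deriv ρ (a + τ) / (a + τ) := by
      apply div_le_div₀ (deriv_nonneg hN hE (by linarith)) hd1 (by linarith) ?_
      nlinarith [hτ.2]
    exact mul_le_mul_of_nonneg_right h4 hτ0
  have h5 := intervalIntegral.integral_mono_on hT
    (((continuous_const.mul continuous_id).continuousOn).intervalIntegrable)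
    (fint hE ha le_rfl hT) key
  calc deriv ρ a / ((K + 1) * a) * (T ^ 2 / 2)
      = ∫ τ in (0:ℝ)..T, deriv ρ a / ((K + 1) * a) * τ := by
        rw [intervalIntegral.integral_const_mul, integral_id]; norm_num
  _ ≤ shiftN ρ a T := h5

lemma shift_lower2 (hc₁ : 0 < c₁) (hN : IsNFunction ρ) (hE : IsElliptic ρ c₁ c₂)
    {a s : ℝ} (ha : 0 < a) (hs : 2 * (4:ℝ) ^ (c₁⁻¹) * a ≤ s) :
    deriv ρ a * s ≤ shiftN ρ a s := by
  have h4 : (1:ℝ) ≤ (4:ℝ) ^ (c₁⁻¹) := Real.one_le_rpow (by norm_num) (by positivity)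
  have has : a ≤ s / 2 := by nlinarith
  have hs0 : 0 < s := by nlinarith
  have hsplit : shiftN ρ a s =
      (∫ τ in (0:ℝ)..(s/2), deriv ρ (a + τ) / (a + τ) * τ) +
        ∫ τ in (s/2)..s, deriv ρ (a + τ) / (a + τ) * τ :=
    (intervalIntegral.integral_add_adjacent_intervals
      (fint hE ha le_rfl (by positivity)) (fint hE ha (by positivity) (by linarith))).symm
  have hfirst : 0 ≤ ∫ τ in (0:ℝ)..(s/2), deriv ρ (a + τ) / (a + τ) * τ :=
    shift_nonneg hN hE ha.le (by positivity)
  have hkey : ∀ τ ∈ Icc (s/2) s, deriv ρ (s/2) / 2 ≤ deriv ρ (a + τ) / (a + τ) * τ := by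
    intro τ hτ
    have hτ1 : s/2 ≤ τ := hτ.1
    have hτ2 : τ ≤ s := hτ.2
    have hτpos : 0 < τ := by linarith
    have hd1 : deriv ρ (s/2) ≤ deriv ρ (a + τ) :=
      mono_d hc₁ hN hE (mem_Ioi.mpr (by positivity)) (mem_Ioi.mpr (by linarith)) (by linarith)
    have hdnn : 0 ≤ deriv ρ (s/2) := deriv_nonneg hN hE (by positivity)
    rw [div_mul_eq_mul_div, le_div_iff₀ (by linarith)]
    nlinarith
  have hsecond : (s - s/2) * (deriv ρ (s/2) / 2) ≤
      ∫ τ in (s/2)..s, deriv ρ (a + τ) / (a + τ) * τ := by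
    have := intervalIntegral.integral_mono_on (by linarith : s/2 ≤ s)
      (intervalIntegrable_const) (fint hE ha (by positivity) (by linarith)) hkey
    rwa [intervalIntegral.integral_const, smul_eq_mul] at this
  have hgg : ((s/2)/a) ^ c₁ * deriv ρ a ≤ deriv ρ (s/2) := grow_lower hc₁ hN hE ha has
  have hbase : (4:ℝ) ^ (c₁⁻¹) ≤ (s/2)/a := by
    rw [le_div_iff₀ ha]; linarith
  have hcc : (4:ℝ) ≤ ((s/2)/a) ^ c₁ := by
    calc (4:ℝ) = ((4:ℝ) ^ (c₁⁻¹)) ^ c₁ := by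
          rw [← Real.rpow_mul (by norm_num : (0:ℝ) ≤ 4), inv_mul_cancel₀ hc₁.ne',
            Real.rpow_one]
    _ ≤ ((s/2)/a) ^ c₁ := Real.rpow_le_rpow (by positivity) hbase hc₁.le
  have h4d : 4 * deriv ρ a ≤ deriv ρ (s/2) :=
    le_trans (mul_le_mul_of_nonneg_right hcc (deriv_nonneg hN hE ha)) hgg
  have hdnn : 0 ≤ deriv ρ a := deriv_nonneg hN hE ha
  rw [hsplit]
  nlinarith

lemma deriv_zero (hN : IsNFunction ρ) : deriv ρ 0 = 0 := by
  by_cases h : DifferentiableAt ℝ ρ 0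
  · have h1 : HasDerivWithinAt ρ (deriv ρ 0) (Ioi 0) 0 :=
      h.hasDerivAt.hasDerivWithinAt
    rw [hasDerivWithinAt_iff_tendsto_slope' (notMem_Ioi.2 le_rfl)] at h1
    have h2 : Tendsto (fun t => ρ t / t) (nhdsWithin 0 (Ioi 0)) (nhds (deriv ρ 0)) := by
      refine h1.congr' ?_
      filter_upwards [self_mem_nhdsWithin] with y hy
      rw [slope_def_field, hN.1, sub_zero, sub_zero]
    exact tendsto_nhds_unique h2 hN.2.2.2.1
  · exact deriv_zero_of_not_differentiableAt h

lemma shift_zero (a : ℝ) : shiftN ρ a 0 = 0 :=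
  intervalIntegral.integral_same

lemma conj_zero (hN : IsNFunction ρ) (hE : IsElliptic ρ c₁ c₂) {a : ℝ} (ha : 0 ≤ a) :
    conjN (shiftN ρ a) 0 = 0 := by
  rw [conjN]
  apply le_antisymm
  · apply Real.sSup_le _ le_rfl
    rintro y ⟨s, hs, rfl⟩
    have := shift_nonneg hN hE ha hs
    nlinarith
  · apply le_csSup
    · refine ⟨0, ?_⟩
      rintro y ⟨s, hs, rfl⟩
      have := shift_nonneg hN hE ha hs
      nlinarith
    · exact ⟨0, le_rfl, by rw [shift_zero]; ring⟩

lemma elem_le (hc₁ : 0 < c₁) (hc₂ : 0 < c₂) (hN : IsNFunction ρ) (hE : IsElliptic ρ c₁ c₂)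
    {a lam : ℝ} (ha : 0 < a) (hl0 : 0 ≤ lam) (hl1 : lam ≤ 1) {s : ℝ} (hs : 0 ≤ s) :
    s * (lam * deriv ρ a) - shiftN ρ a s ≤
      (2 * (4:ℝ) ^ (c₁⁻¹) + 1) * 2 ^ c₂ * (lam ^ 2 * ρ a) := by
  set K := 2 * (4:ℝ) ^ (c₁⁻¹) with hKdef
  have hK0 : (0:ℝ) < K := by positivity
  have hbnn : 0 ≤ deriv ρ a := deriv_nonneg hN hE ha
  have hB : (0:ℝ) < 2 ^ c₂ := Real.rpow_pos_of_pos (by norm_num) _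
  have hρnn : 0 ≤ ρ a := rho_nonneg hN ha.le
  rcases le_or_gt s (K * a) with hcase | hcase
  · have hlow := shift_lower1 hc₁ hN hE ha hs hK0 hcase
    have hab := ad_le hc₁ hN hE ha
    have expand : deriv ρ a / ((K+1)*a) * (s^2/2) + ((K+1)*a) * lam^2 * deriv ρ a / 2
        - s * (lam * deriv ρ a)
        = deriv ρ a * (s - ((K+1)*a) * lam)^2 / (2*((K+1)*a)) := by
      field_simp
      ring
    have h9 : 0 ≤ deriv ρ a * (s - ((K+1)*a) * lam)^2 / (2*((K+1)*a)) :=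
      div_nonneg (mul_nonneg hbnn (sq_nonneg _)) (by positivity)
    have h10 : ((K+1)*a) * lam^2 * deriv ρ a / 2 ≤ (K+1) * 2 ^ c₂ * (lam^2 * ρ a) := by
      have h11 := mul_le_mul_of_nonneg_left hab
        (show (0:ℝ) ≤ (K+1) * lam^2 / 2 by positivity)
      nlinarith [h11]
    nlinarith [hlow, expand, h9, h10]
  · have h2 := shift_lower2 hc₁ hN hE ha hcase.le
    have h3 : s * (lam * deriv ρ a) ≤ s * deriv ρ a := by
      nlinarith [mul_nonneg (mul_nonneg hs hbnn) (sub_nonneg.mpr hl1)]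
    have hRHS : 0 ≤ (K+1) * 2 ^ c₂ * (lam^2 * ρ a) := by positivity
    nlinarith [h2, h3, hRHS]

lemma conj_upper (hc₁ : 0 < c₁) (hc₂ : 0 < c₂) (hN : IsNFunction ρ) (hE : IsElliptic ρ c₁ c₂)
    {a lam : ℝ} (ha : 0 < a) (hl0 : 0 ≤ lam) (hl1 : lam ≤ 1) :
    conjN (shiftN ρ a) (lam * deriv ρ a) ≤
      (2 * (4:ℝ) ^ (c₁⁻¹) + 1) * 2 ^ c₂ * (lam ^ 2 * ρ a) := by
  rw [conjN]
  apply Real.sSup_le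
  · rintro y ⟨s, hs, rfl⟩
    exact elem_le hc₁ hc₂ hN hE ha hl0 hl1 hs
  · have := rho_nonneg hN ha.le
    positivity

lemma conj_bdd (hc₁ : 0 < c₁) (hc₂ : 0 < c₂) (hN : IsNFunction ρ) (hE : IsElliptic ρ c₁ c₂)
    {a lam : ℝ} (ha : 0 < a) (hl0 : 0 ≤ lam) (hl1 : lam ≤ 1) :
    BddAbove {y | ∃ s ≥ 0, y = s * (lam * deriv ρ a) - shiftN ρ a s} := by
  refine ⟨(2 * (4:ℝ) ^ (c₁⁻¹) + 1) * 2 ^ c₂ * (lam ^ 2 * ρ a), ?_⟩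
  rintro y ⟨s, hs, rfl⟩
  exact elem_le hc₁ hc₂ hN hE ha hl0 hl1 hs

lemma conj_nonneg (hc₁ : 0 < c₁) (hc₂ : 0 < c₂) (hN : IsNFunction ρ) (hE : IsElliptic ρ c₁ c₂)
    {a lam : ℝ} (ha : 0 < a) (hl0 : 0 ≤ lam) (hl1 : lam ≤ 1) :
    0 ≤ conjN (shiftN ρ a) (lam * deriv ρ a) := by
  rw [conjN]
  apply le_csSup (conj_bdd hc₁ hc₂ hN hE ha hl0 hl1)
  exact ⟨0, le_rfl, by rw [shift_zero]; ring⟩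

lemma conj_lower (hc₁ : 0 < c₁) (hc₂ : 0 < c₂) (hN : IsNFunction ρ) (hE : IsElliptic ρ c₁ c₂)
    {a lam : ℝ} (ha : 0 < a) (hl0 : 0 ≤ lam) (hl1 : lam ≤ 1) :
    lam ^ 2 * ρ a ≤ 2 * 2 ^ c₂ * conjN (shiftN ρ a) (lam * deriv ρ a) := by
  set ε := (2:ℝ) ^ (-c₂) with hεdef
  have hεpos : 0 < ε := Real.rpow_pos_of_pos (by norm_num) _
  have hε1 : ε ≤ 1 := Real.rpow_le_one_of_one_le_of_nonpos (by norm_num) (by linarith)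
  have hεε : (2:ℝ) ^ c₂ * ε = 1 := by
    rw [hεdef, ← Real.rpow_add (by norm_num : (0:ℝ) < 2)]
    simp
  have hbnn : 0 ≤ deriv ρ a := deriv_nonneg hN hE ha
  have hρa : ρ a ≤ a * deriv ρ a := rho_le hc₁ hN hE ha
  have hεla : ε * lam * a ≤ a := by
    nlinarith [mul_le_mul_of_nonneg_right (mul_le_mul_of_nonneg_right hε1 hl0) ha.le,
      mul_le_mul_of_nonneg_right hl1 ha.le]
  have hup := shift_upper hc₂ hN hE ha (T := ε * lam * a) (by positivity) hεla
  have e3 : shiftN ρ a (ε * lam * a) ≤ ε * lam^2 * (a * deriv ρ a) / 2 := by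
    calc shiftN ρ a (ε * lam * a) ≤ 2 ^ c₂ * deriv ρ a / a * ((ε * lam * a)^2 / 2) := hup
    _ = (2 ^ c₂ * ε) * (ε * lam^2 * (a * deriv ρ a)) / 2 := by field_simp
    _ = ε * lam^2 * (a * deriv ρ a) / 2 := by rw [hεε]; ring
  have hle : ε / 2 * (lam ^ 2 * ρ a) ≤
      (ε * lam * a) * (lam * deriv ρ a) - shiftN ρ a (ε * lam * a) := by
    nlinarith [mul_le_mul_of_nonneg_left hρa (show (0:ℝ) ≤ ε * lam^2 / 2 by positivity)]
  have hmem : (ε * lam * a) * (lam * deriv ρ a) - shiftN ρ a (ε * lam * a) ∈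
      {y | ∃ s ≥ 0, y = s * (lam * deriv ρ a) - shiftN ρ a s} :=
    ⟨ε * lam * a, by positivity, rfl⟩
  have hconj : ε / 2 * (lam ^ 2 * ρ a) ≤ conjN (shiftN ρ a) (lam * deriv ρ a) := by
    rw [conjN]
    exact le_trans hle (le_csSup (conj_bdd hc₁ hc₂ hN hE ha hl0 hl1) hmem)
  have h20 := mul_le_mul_of_nonneg_left hconj (show (0:ℝ) ≤ 2 * 2 ^ c₂ by positivity)
  have h21 : 2 * (2:ℝ) ^ c₂ * (ε / 2 * (lam ^ 2 * ρ a)) = lam ^ 2 * ρ a := by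
    have : 2 * (2:ℝ) ^ c₂ * (ε / 2 * (lam ^ 2 * ρ a)) = ((2:ℝ) ^ c₂ * ε) * (lam ^ 2 * ρ a) := by
      ring
    rw [this, hεε, one_mul]
  linarith [h20, h21.symm.le]

end Stmt8

/-- For an elliptic N-function `ρ`, uniformly in `a ≥ 0` and
`λ ∈ [0,1]`: `ρ_a(λ a) ∼ λ² ρ(a) ∼ (ρ_a)*(λ ρ'(a))`, with constants depending
only on the characteristics of `ρ`. -/
theorem statement8 (ρ : ℝ → ℝ) (c₁ c₂ : ℝ) (hc₁ : 0 < c₁) (hc₂ : 0 < c₂)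
    (hN : IsNFunction ρ) (hE : IsElliptic ρ c₁ c₂) :
    ∃ C > 0, ∀ a ≥ (0:ℝ), ∀ lam ∈ Set.Icc (0:ℝ) 1,
      shiftN ρ a (lam * a) ≤ C * (lam ^ 2 * ρ a) ∧
      lam ^ 2 * ρ a ≤ C * shiftN ρ a (lam * a) ∧
      conjN (shiftN ρ a) (lam * deriv ρ a) ≤ C * (lam ^ 2 * ρ a) ∧
      lam ^ 2 * ρ a ≤ C * conjN (shiftN ρ a) (lam * deriv ρ a) := by
  classical
  set B := (2:ℝ) ^ c₂ with hBdef
  set K := 2 * (4:ℝ) ^ (c₁⁻¹) with hKdef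
  have hB0 : 0 < B := Real.rpow_pos_of_pos (by norm_num) _
  have hB1 : 1 ≤ B := by
    rw [hBdef, show (1:ℝ) = (2:ℝ) ^ (0:ℝ) by rw [Real.rpow_zero]]
    exact Real.rpow_le_rpow_left_iff (by norm_num) |>.mpr hc₂.le
  have hK0 : 0 < K := by positivity
  refine ⟨(K + 5) * (B * B) + 4, by positivity, ?_⟩
  intro a ha lam hlam
  obtain ⟨hl0, hl1⟩ := hlam
  have hρnn : 0 ≤ ρ a := Stmt8.rho_nonneg hN ha
  by_cases hdeg : a = 0 ∨ lam = 0
  · -- degenerate case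
    have hla : lam * a = 0 := by
      rcases hdeg with h | h <;> simp [h]
    have hX : lam ^ 2 * ρ a = 0 := by
      rcases hdeg with h | h
      · simp [h, hN.1]
      · simp [h]
    have htz : lam * deriv ρ a = 0 := by
      rcases hdeg with h | h
      · rw [h, Stmt8.deriv_zero hN, mul_zero]
      · simp [h]
    have hs0 : shiftN ρ a (lam * a) = 0 := by rw [hla]; exact Stmt8.shift_zero a
    have hc0 : conjN (shiftN ρ a) (lam * deriv ρ a) = 0 := by
      rw [htz]; exact Stmt8.conj_zero hN hE ha
    rw [hs0, hc0, hX]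
    norm_num
  · push_neg at hdeg
    have ha' : 0 < a := lt_of_le_of_ne ha (Ne.symm hdeg.1)
    have hbnn : 0 ≤ deriv ρ a := Stmt8.deriv_nonneg hN hE ha'
    have hab := Stmt8.ad_le hc₁ hN hE ha'  -- a * deriv ρ a ≤ 2 * B * ρ a
    have hρa := Stmt8.rho_le hc₁ hN hE ha'  -- ρ a ≤ a * deriv ρ a
    have hla0 : 0 ≤ lam * a := by positivity
    have hlaa : lam * a ≤ a := by nlinarith
    have hCbig : ∀ c : ℝ, c ≤ (K + 5) * (B * B) + 4 → ∀ X Y : ℝ, 0 ≤ Y → X ≤ c * Y →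
        X ≤ ((K + 5) * (B * B) + 4) * Y := by
      intro c hc X Y hY hXY
      nlinarith [mul_le_mul_of_nonneg_right hc hY]
    refine ⟨?_, ?_, ?_, ?_⟩
    · -- shift upper
      have hup := Stmt8.shift_upper hc₂ hN hE ha' hla0 hlaa
      refine hCbig (B * B) (by nlinarith) _ _ (by positivity) ?_
      calc shiftN ρ a (lam * a) ≤ B * deriv ρ a / a * ((lam * a) ^ 2 / 2) := hup
      _ = B * lam ^ 2 * (a * deriv ρ a) / 2 := by field_simp
      _ ≤ B * lam ^ 2 * (2 * B * ρ a) / 2 := by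
          have := mul_le_mul_of_nonneg_left hab (show (0:ℝ) ≤ B * lam ^ 2 by positivity)
          linarith
      _ = B * B * (lam ^ 2 * ρ a) := by ring
    · -- shift lower
      have hlow := Stmt8.shift_lower1 hc₁ hN hE ha' hla0 (K := 1) one_pos (by linarith)
      have he : deriv ρ a / ((1 + 1) * a) * ((lam * a) ^ 2 / 2)
          = lam ^ 2 * (a * deriv ρ a) / 4 := by field_simp; ring
      rw [he] at hlow
      have h1 : lam ^ 2 * ρ a ≤ 4 * shiftN ρ a (lam * a) := by
        nlinarith [mul_le_mul_of_nonneg_left hρa (show (0:ℝ) ≤ lam ^ 2 by positivity)]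
      exact hCbig 4 (by nlinarith) _ _
        (Stmt8.shift_nonneg hN hE ha'.le hla0) h1
    · -- conj upper
      have hcu := Stmt8.conj_upper hc₁ hc₂ hN hE ha' hl0 hl1
      refine hCbig ((K + 1) * B) ?_ _ _ (by positivity) hcu
      nlinarith [mul_le_mul_of_nonneg_left hB1 (mul_nonneg (by positivity : (0:ℝ) ≤ K + 1) hB0.le),
        mul_nonneg hB0.le hB0.le, mul_nonneg (mul_nonneg hK0.le hB0.le) hB0.le]
    · -- conj lower
      have hcl := Stmt8.conj_lower hc₁ hc₂ hN hE ha' hl0 hl1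
      exact hCbig (2 * B) (by nlinarith) _ _
        (Stmt8.conj_nonneg hc₁ hc₂ hN hE ha' hl0 hl1) hcl
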